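/- Let A be a real closed domain with A ≠ qf(A), satisfying: for all 0 ≤ a ≤ b in A there exists c with bc = a². Then the convex hull V of A in qf(A) is a proper convex subring (hence a valuation ring of qf(A)), and A ∩ m_V = m_A, where m_A is the maximal ideal of the local ring A. -/

import Mathlib

/-- Let `A` be a non-trivial real closed domain (a proper subring of its
ordered fraction field `K`, local, with the real closed ring divisibility and square
conditions). Then the convex hull `V` of `A` in `K` is a proper convex subring of `K`
(hence a valuation ring of `K`), and `A ∩ m_V = m_A`. -/
theorem convexHull_valuationRing_and_maximalIdeal {K : Type*} [Field K] [LinearOrder K] [IsStrictOrderedRing K]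
    (A : Subring K) [IsLocalRing A]
    (hfrac : ∀ x : K, ∃ a ∈ A, ∃ b ∈ A, b ≠ 0 ∧ x = a / b)
    (hne : ∃ x : K, x ∉ A)
    (hsq : ∀ a ∈ A, (0 : K) ≤ a → ∃ b ∈ A, b ^ 2 = a)
    (hdiv : ∀ a ∈ A, ∀ b ∈ A, 0 ≤ a → a ≤ b → ∃ c ∈ A, b * c = a ^ 2) :
    ∃ V : Subring K,
      (V : Set K) = {x : K | ∃ a ∈ A, |x| ≤ a} ∧
      (∃ y : K, y ∉ V) ∧
      (∀ x y : K, 0 ≤ y → y ≤ x → x ∈ V → y ∈ V) ∧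
      (∀ x : K, x ≠ 0 → x ∈ V ∨ x⁻¹ ∈ V) ∧
      (∀ a : A, a ∈ IsLocalRing.maximalIdeal A ↔ ¬ ∃ y ∈ V, (a : K) * y = 1) := by
  have habs : ∀ a : K, a ∈ A → |a| ∈ A := by
    intro a ha
    rcases abs_choice a with h | h
    · rw [h]; exact ha
    · rw [h]; exact A.neg_mem ha
  -- key consequence of hdiv : any element of A that is ≥ 1 is invertible in A
  have hunit : ∀ b ∈ A, (1 : K) ≤ b → ∃ c ∈ A, b * c = 1 := by
    intro b hb h1
    obtain ⟨c, hc, hbc⟩ := hdiv 1 A.one_mem b hb zero_le_one h1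
    exact ⟨c, hc, by simpa using hbc⟩
  -- if q ∈ A, q ≠ 0, and |q⁻¹| ≤ m for some m ∈ A, then q⁻¹ ∈ A
  have hinv : ∀ q ∈ A, q ≠ 0 → (∃ m ∈ A, |q⁻¹| ≤ m) → q⁻¹ ∈ A := by
    intro q hq hq0 ⟨m, hm, hminv⟩
    have hqpos : (0 : K) < |q| := abs_pos.mpr hq0
    have h1 : (1 : K) ≤ |q| * m := by
      have h2 : |q| * |q⁻¹| ≤ |q| * m :=
        mul_le_mul_of_nonneg_left hminv hqpos.le
      rwa [← abs_mul, mul_inv_cancel₀ hq0, abs_one] at h2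
    obtain ⟨c, hc, hbc⟩ := hunit (|q| * m) (A.mul_mem (habs q hq) hm) h1
    rcases abs_choice q with h | h
    · have : q * (m * c) = 1 := by rw [← mul_assoc, ← h]; exact hbc
      rw [inv_eq_of_mul_eq_one_right this]
      exact A.mul_mem hm hc
    · have hbc' : -q * m * c = 1 := by rw [h] at hbc; exact hbc
      have : q * (-(m * c)) = 1 := by linear_combination hbc'
      rw [inv_eq_of_mul_eq_one_right this]
      exact A.neg_mem (A.mul_mem hm hc)
  let V : Subring K :=
    { carrier := {x : K | ∃ a ∈ A, |x| ≤ a}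
      zero_mem' := ⟨0, A.zero_mem, by simp⟩
      one_mem' := ⟨1, A.one_mem, by simp⟩
      add_mem' := by
        rintro x y ⟨a, ha, hx⟩ ⟨b, hb, hy⟩
        exact ⟨a + b, A.add_mem ha hb, (abs_add_le _ _).trans (add_le_add hx hy)⟩
      mul_mem' := by
        rintro x y ⟨a, ha, hx⟩ ⟨b, hb, hy⟩
        exact ⟨a * b, A.mul_mem ha hb, by
          rw [abs_mul]
          exact mul_le_mul hx hy (abs_nonneg _) ((abs_nonneg _).trans hx)⟩
      neg_mem' := by
        rintro x ⟨a, ha, hx⟩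
        exact ⟨a, ha, by rwa [abs_neg]⟩ }
  have hAV : ∀ b ∈ A, b ∈ V := fun b hb => ⟨|b|, habs b hb, le_refl _⟩
  refine ⟨V, rfl, ?_, ?_, ?_, ?_⟩
  · -- properness
    obtain ⟨x, hx⟩ := hne
    by_contra h
    push_neg at h
    apply hx
    obtain ⟨p, hp, q, hq, hq0, rfl⟩ := hfrac x
    obtain ⟨m, hm, hminv⟩ := h q⁻¹
    have : q⁻¹ ∈ A := hinv q hq hq0 ⟨m, hm, hminv⟩
    rw [div_eq_mul_inv]
    exact A.mul_mem hp this
  · -- convexity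
    rintro x y hy0 hyx ⟨a, ha, hxa⟩
    exact ⟨a, ha, by
      rw [abs_of_nonneg hy0]
      exact hyx.trans ((le_abs_self x).trans hxa)⟩
  · -- valuation ring property
    intro x hx0
    by_cases hx : x ∈ V
    · exact Or.inl hx
    · right
      refine ⟨1, A.one_mem, ?_⟩
      have h1 : (1 : K) ≤ |x| := by
        by_contra h1
        exact hx ⟨1, A.one_mem, le_of_not_ge h1⟩
      rw [abs_inv]
      exact inv_le_one_of_one_le₀ h1
  · -- maximal ideal
    intro a
    rw [IsLocalRing.mem_maximalIdeal, mem_nonunits_iff]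
    constructor
    · rintro hnu ⟨y, hyV, hay⟩
      apply hnu
      have hy0 : y ≠ 0 := by
        intro h; rw [h, mul_zero] at hay; exact one_ne_zero hay.symm
      have ha0 : (a : K) ≠ 0 := by
        intro h; rw [h, zero_mul] at hay; exact one_ne_zero hay.symm
      have hyinv : y = ((a : K))⁻¹ := (inv_eq_of_mul_eq_one_right hay).symm
      have : ((a : K))⁻¹ ∈ A := by
        apply hinv (a : K) a.2 ha0
        obtain ⟨m, hm, hmy⟩ := hyV
        exact ⟨m, hm, by rwa [← hyinv]⟩
      refine IsUnit.of_mul_eq_one (a := a) ⟨_, this⟩ (Subtype.ext ?_)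
      push_cast
      exact mul_inv_cancel₀ ha0
    · intro h
      intro hu
      obtain ⟨u, hu⟩ := hu
      apply h
      refine ⟨((u⁻¹ : Aˣ) : A), hAV _ ((u⁻¹ : Aˣ) : A).2, ?_⟩
      have : ((u : A) * ((u⁻¹ : Aˣ) : A) : A) = 1 := by
        rw [← Units.val_mul, mul_inv_cancel, Units.val_one]
      calc (a : K) * ((u⁻¹ : Aˣ) : A)
          = (((u : A) * ((u⁻¹ : Aˣ) : A) : A) : K) := by rw [hu]; push_cast; ring
        _ = 1 := by rw [this]; rfl
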